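/- There exists a universal constant C > 0 with the following property: for every real α > 1 and every finite metric space (X,d) with n ≥ 1 points, there exists a subset Y ⊆ X with |Y| ≥ n^(1 − C·log(2α)/α) together with an ultrametric ρ on Y satisfying d(x,y) ≤ ρ(x,y) ≤ α·d(x,y) for all x,y ∈ Y. -/

import Mathlib

open Finset
open scoped Classical
set_option linter.unusedSectionVars false
set_option linter.unusedVariables false
set_option maxHeartbeats 1000000

/-- `ρ` is an ultrametric on the subset `Y` of `X`. -/
def IsUltrametricOn {X : Type} (Y : Set X) (ρ : X → X → ℝ) : Prop :=
  (∀ x ∈ Y, ρ x x = 0) ∧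
  (∀ x ∈ Y, ∀ y ∈ Y, x ≠ y → 0 < ρ x y) ∧
  (∀ x ∈ Y, ∀ y ∈ Y, ρ x y = ρ y x) ∧
  (∀ x ∈ Y, ∀ y ∈ Y, ∀ z ∈ Y, ρ x z ≤ max (ρ x y) (ρ y z))

namespace MRU


variable {X : Type} [MetricSpace X] [Fintype X] {m : ℕ}

noncomputable def mball (x : X) (r : ℝ) : Finset X :=
  univ.filter (fun y => dist x y ≤ r)

lemma mem_mball {x y : X} {r : ℝ} : y ∈ mball x r ↔ dist x y ≤ r := by
  simp [mball]

lemma self_mem_mball {x : X} {r : ℝ} (hr : 0 ≤ r) : x ∈ mball x r := by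
  simp [mball, hr]

lemma mball_mono {x : X} {r r' : ℝ} (h : r ≤ r') : mball x r ⊆ mball x r' := by
  intro y hy
  exact mem_mball.mpr ((mem_mball.mp hy).trans h)

lemma mball_card_pos {x : X} {r : ℝ} (hr : 0 ≤ r) : 0 < (mball x r).card :=
  card_pos.mpr ⟨x, self_mem_mball hr⟩

lemma mball_card_le {x : X} {r : ℝ} : (mball x r).card ≤ Fintype.card X :=
  card_le_card (subset_univ _) |>.trans (le_of_eq (card_univ))

noncomputable def mhead (σ : X ≃ Fin m) (r : ℝ) (x : X) : X :=
  if h : x ∈ mball x r then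
    σ.symm (((mball x r).image σ).min' ⟨σ x, mem_image_of_mem _ h⟩)
  else x

lemma mhead_mem {σ : X ≃ Fin m} {r : ℝ} {x : X} (hr : 0 ≤ r) :
    mhead σ r x ∈ mball x r := by
  rw [mhead, dif_pos (self_mem_mball hr)]
  obtain ⟨y, hy, hσ⟩ := mem_image.mp (min'_mem ((mball x r).image σ)
    ⟨σ x, mem_image_of_mem _ (self_mem_mball hr)⟩)
  rw [← hσ, Equiv.symm_apply_apply]
  exact hy

lemma mhead_le {σ : X ≃ Fin m} {r : ℝ} {x y : X} (hr : 0 ≤ r) (hy : y ∈ mball x r) :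
    σ (mhead σ r x) ≤ σ y := by
  rw [mhead, dif_pos (self_mem_mball hr), Equiv.apply_symm_apply]
  exact min'_le _ _ (mem_image_of_mem _ hy)

/-- key padding lemma: if the head of the enlarged ball around `x` is close to `x`,
then every point `z` near `x` has the same `r`-head, namely that head. -/
lemma mhead_eq_of_close {σ : X ≃ Fin m} {r t : ℝ} {x z : X} (ht : 0 ≤ t)
    (hGood : dist x (mhead σ (r + t) x) ≤ r - t) (hz : dist x z ≤ t) :
    mhead σ r z = mhead σ (r + t) x := by
  have hrt : 0 ≤ r - t := le_trans dist_nonneg hGood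
  have hr : 0 ≤ r := by linarith
  have hrt' : 0 ≤ r + t := by linarith
  set y0 := mhead σ (r + t) x with hy0
  have hy0z : y0 ∈ mball z r := by
    rw [mem_mball]
    calc dist z y0 ≤ dist z x + dist x y0 := dist_triangle _ _ _
    _ ≤ t + (r - t) := by
        have := hGood
        have h1 : dist z x ≤ t := by rw [dist_comm]; exact hz
        linarith
    _ = r := by ring
  have hzz : z ∈ mball z r := self_mem_mball hr
  rw [mhead, dif_pos hzz]
  have hmin : ((mball z r).image σ).min' ⟨σ z, mem_image_of_mem _ hzz⟩ = σ y0 := by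
    apply le_antisymm
    · exact min'_le _ _ (mem_image_of_mem _ hy0z)
    · apply le_min'
      intro u hu
      obtain ⟨y, hy, rfl⟩ := mem_image.mp hu
      have hyW : y ∈ mball x (r + t) := by
        rw [mem_mball]
        calc dist x y ≤ dist x z + dist z y := dist_triangle _ _ _
        _ ≤ t + r := add_le_add hz (mem_mball.mp hy)
        _ = r + t := by ring
      exact mhead_le hrt' hyW
  rw [hmin, Equiv.symm_apply_apply]


variable {X : Type} [MetricSpace X] [Fintype X] {m : ℕ}

noncomputable def argminW (W : Finset X) (hW : W.Nonempty) (σ : X ≃ Fin m) : X :=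
  σ.symm ((W.image σ).min' (hW.image σ))

lemma argminW_mem {W : Finset X} (hW : W.Nonempty) (σ : X ≃ Fin m) :
    argminW W hW σ ∈ W := by
  obtain ⟨y, hy, hσ⟩ := mem_image.mp (min'_mem (W.image σ) (hW.image σ))
  rw [argminW, ← hσ, Equiv.symm_apply_apply]
  exact hy

lemma swap_image {W : Finset X} {w w' : X} (hw : w ∈ W) (hw' : w' ∈ W) :
    W.image (Equiv.swap w w') = W := by
  apply eq_of_subset_of_card_le
  · intro z hz
    obtain ⟨u, hu, rfl⟩ := mem_image.mp hz
    rcases eq_or_ne u w with rfl | h1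
    · rwa [Equiv.swap_apply_left]
    rcases eq_or_ne u w' with rfl | h2
    · rwa [Equiv.swap_apply_right]
    · rwa [Equiv.swap_apply_of_ne_of_ne h1 h2]
  · rw [Finset.card_image_of_injective _ (Equiv.injective _)]

lemma argminW_swap {W : Finset X} (hW : W.Nonempty) {w w' : X} (hw : w ∈ W) (hw' : w' ∈ W)
    (σ : X ≃ Fin m) :
    argminW W hW ((Equiv.swap w w').trans σ) = Equiv.swap w w' (argminW W hW σ) := by
  have himg : W.image ((Equiv.swap w w').trans σ) = W.image σ := by
    rw [show ((Equiv.swap w w').trans σ : X → Fin m) = (σ : X → Fin m) ∘ (Equiv.swap w w') from rfl,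
      ← Finset.image_image, swap_image hw hw']
  rw [argminW, argminW]
  have hmin : (W.image ((Equiv.swap w w').trans σ)).min'
      (hW.image _) = (W.image σ).min' (hW.image σ) := by
    congr 1
  rw [hmin]
  rfl

lemma fiber_card_eq {W : Finset X} (hW : W.Nonempty) {w w' : X} (hw : w ∈ W) (hw' : w' ∈ W) :
    (univ.filter fun σ : X ≃ Fin m => argminW W hW σ = w).card
      = (univ.filter fun σ : X ≃ Fin m => argminW W hW σ = w').card := by
  apply Finset.card_bij' (fun σ _ => (Equiv.swap w w').trans σ)
    (fun σ _ => (Equiv.swap w w').trans σ)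
  · intro σ hσ
    rw [mem_filter] at hσ ⊢
    refine ⟨mem_univ _, ?_⟩
    rw [argminW_swap hW hw hw', hσ.2, Equiv.swap_apply_left]
  · intro σ hσ
    rw [mem_filter] at hσ ⊢
    refine ⟨mem_univ _, ?_⟩
    rw [argminW_swap hW hw hw', hσ.2, Equiv.swap_apply_right]
  · intro σ _
    ext z
    simp [Equiv.swap_apply_self]
  · intro σ _
    ext z
    simp [Equiv.swap_apply_self]

lemma count_filter_fiberwise {W V : Finset X} (hW : W.Nonempty) (hV : V ⊆ W) :
    (univ.filter fun σ : X ≃ Fin m => argminW W hW σ ∈ V).card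
      = ∑ w ∈ V, (univ.filter fun σ : X ≃ Fin m => argminW W hW σ = w).card := by
  rw [Finset.card_eq_sum_card_fiberwise
    (s := univ.filter fun σ : X ≃ Fin m => argminW W hW σ ∈ V)
    (f := argminW W hW) (t := V) (fun σ hσ => (mem_filter.mp hσ).2)]
  apply Finset.sum_congr rfl
  intro w hwV
  congr 1
  ext σ
  simp only [mem_filter, mem_univ, true_and]
  exact ⟨fun h => h.2, fun h => ⟨h ▸ hwV, h⟩⟩

lemma count_argmin (W V : Finset X) (hW : W.Nonempty) (hV : V ⊆ W) :
    (univ.filter fun σ : X ≃ Fin m => argminW W hW σ ∈ V).card * W.card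
      = Fintype.card (X ≃ Fin m) * V.card := by
  obtain ⟨w0, hw0⟩ := id hW
  set c := (univ.filter fun σ : X ≃ Fin m => argminW W hW σ = w0).card with hc
  have hfib : ∀ w ∈ W, (univ.filter fun σ : X ≃ Fin m => argminW W hW σ = w).card = c :=
    fun w hw => fiber_card_eq hW hw hw0
  have hK : Fintype.card (X ≃ Fin m) = W.card * c := by
    have h1 : (univ.filter fun σ : X ≃ Fin m => argminW W hW σ ∈ W).card
        = Fintype.card (X ≃ Fin m) := by
      rw [filter_true_of_mem (fun σ _ => argminW_mem hW σ), card_univ]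
    rw [← h1, count_filter_fiberwise hW (subset_refl W),
      Finset.sum_congr rfl (fun w hw => hfib w hw), sum_const, smul_eq_mul]
  have hVc : (univ.filter fun σ : X ≃ Fin m => argminW W hW σ ∈ V).card = V.card * c := by
    rw [count_filter_fiberwise hW hV,
      Finset.sum_congr rfl (fun w hw => hfib w (hV hw)), sum_const, smul_eq_mul]
  rw [hVc, hK]
  ring



lemma amgm {N : ℕ} (hN : 1 ≤ N) (z : Fin N → ℝ) (hz : ∀ a, 0 ≤ z a) :
    ((∏ a, z a) ^ ((N : ℝ)⁻¹)) * N ≤ ∑ a, z a := by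
  have hNpos : (0 : ℝ) < N := by exact_mod_cast hN
  have h := Real.geom_mean_le_arith_mean_weighted univ (fun _ => (N : ℝ)⁻¹) z
    (fun _ _ => by positivity) (by simp [Finset.card_univ]; field_simp) (fun a _ => hz a)
  have hprod : ∏ a, z a ^ ((N : ℝ)⁻¹) = (∏ a, z a) ^ ((N : ℝ)⁻¹) :=
    Real.finset_prod_rpow univ z (fun a _ => hz a) _
  rw [hprod] at h
  have hsum : ∑ a, (N : ℝ)⁻¹ * z a = (N : ℝ)⁻¹ * ∑ a, z a := by
    rw [← Finset.mul_sum]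
  rw [hsum] at h
  calc ((∏ a, z a) ^ ((N : ℝ)⁻¹)) * N ≤ ((N : ℝ)⁻¹ * ∑ a, z a) * N := by
        apply mul_le_mul_of_nonneg_right h (le_of_lt hNpos)
  _ = ∑ a, z a := by field_simp

lemma telescope (u v : ℕ → ℝ) (hu : ∀ j, 0 < u j) (hv : ∀ j, 0 < v j)
    (h : ∀ j, v (j + 1) ≤ u j) :
    ∀ J : ℕ, 1 ≤ J → u (J - 1) / v 0 ≤ ∏ j ∈ Finset.range J, (u j / v j) := by
  intro J
  induction J with
  | zero => intro h0; omega
  | succ J ih =>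
    intro _
    rcases Nat.eq_zero_or_pos J with rfl | hJpos
    · simp [Finset.prod_range_one]
    · have hJ1 : 1 ≤ J := hJpos
      have hih := ih hJ1
      rw [Finset.prod_range_succ]
      have hdivpos : (0:ℝ) < u J / v J := div_pos (hu J) (hv J)
      have hstep : u J / v 0 ≤ (u (J - 1) / v 0) * (u J / v J) := by
        rw [div_mul_div_comm]
        rw [div_le_div_iff₀ (hv 0) (mul_pos (hv 0) (hv J))]
        have hvJ : v J ≤ u (J - 1) := by
          have := h (J - 1)
          rwa [Nat.sub_add_cancel hJ1] at this
        have h1 : u J * v 0 * v J ≤ u J * v 0 * u (J-1) := by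
          apply mul_le_mul_of_nonneg_left hvJ
          exact le_of_lt (mul_pos (hu J) (hv 0))
        calc u J * (v 0 * v J) = u J * v 0 * v J := by ring
        _ ≤ u J * v 0 * u (J-1) := h1
        _ = u (J - 1) * u J * v 0 := by ring
      calc u (J + 1 - 1) / v 0 = u J / v 0 := by norm_num
      _ ≤ (u (J - 1) / v 0) * (u J / v J) := hstep
      _ ≤ (∏ j ∈ Finset.range J, (u j / v j)) * (u J / v J) := by
          apply mul_le_mul_of_nonneg_right hih (le_of_lt hdivpos)


variable {X : Type} [MetricSpace X] [Fintype X] {m : ℕ}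



lemma mhead_eq_argminW (σ : X ≃ Fin m) {r : ℝ} (hr : 0 ≤ r) (x : X) :
    mhead σ r x = argminW (mball x r) ⟨x, self_mem_mball hr⟩ σ := by
  rw [mhead, dif_pos (self_mem_mball hr)]
  rfl

noncomputable def DD (Δ : ℝ) (j : ℕ) : ℝ := Δ / 8 ^ j
noncomputable def stp (Δ : ℝ) (N j : ℕ) : ℝ := DD Δ (j + 1) / (4 * N)
noncomputable def rad (Δ : ℝ) (N j a : ℕ) : ℝ := DD Δ (j + 1) / 4 + a * stp Δ N j

section radlems
variable {Δ : ℝ} {N : ℕ}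

lemma DD_pos (hΔ : 0 < Δ) (j : ℕ) : 0 < DD Δ j := by
  have : (0:ℝ) < 8 ^ j := by positivity
  exact div_pos hΔ this

lemma DD_succ (j : ℕ) : DD Δ (j + 1) = DD Δ j / 8 := by
  rw [DD, DD, pow_succ]
  ring

lemma DD_anti (hΔ : 0 < Δ) {i j : ℕ} (h : i ≤ j) : DD Δ j ≤ DD Δ i := by
  rw [DD, DD]
  apply div_le_div_of_nonneg_left (le_of_lt hΔ) (by positivity)
  exact pow_le_pow_right₀ (by norm_num) h

lemma stp_pos (hΔ : 0 < Δ) (hN : 1 ≤ N) {j : ℕ} : 0 < stp Δ N j := by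
  have h8 : (0:ℝ) < DD Δ (j+1) := DD_pos hΔ _
  have hNpos : (0:ℝ) < (N:ℝ) := by exact_mod_cast hN
  exact div_pos h8 (by positivity)

lemma rad_nonneg (hΔ : 0 < Δ) (hN : 1 ≤ N) (j a : ℕ) : 0 ≤ rad Δ N j a := by
  have h1 := DD_pos (Δ := Δ) hΔ (j+1)
  have h2 := stp_pos (Δ := Δ) (N := N) (j := j) hΔ hN
  have : (0:ℝ) ≤ a := Nat.cast_nonneg a
  rw [rad]
  positivity

lemma rad_mono (hΔ : 0 < Δ) (hN : 1 ≤ N) {j a b : ℕ} (h : a ≤ b) : rad Δ N j a ≤ rad Δ N j b := by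
  rw [rad, rad]
  have h2 := stp_pos (Δ := Δ) (N := N) (j := j) hΔ hN
  have : (a:ℝ) ≤ b := by exact_mod_cast h
  nlinarith

lemma rad_add_one (j a : ℕ) : rad Δ N j (a + 1) + stp Δ N j = rad Δ N j (a + 2) := by
  rw [rad, rad]
  push_cast
  ring

lemma rad_sub_one (j a : ℕ) : rad Δ N j (a + 1) - stp Δ N j = rad Δ N j a := by
  rw [rad, rad]
  push_cast
  ring

lemma rad_le_half (hΔ : 0 < Δ) (hN : 1 ≤ N) {j a : ℕ} (h : a ≤ N) : rad Δ N j a ≤ DD Δ (j + 1) / 2 := by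
  have hD := DD_pos (Δ := Δ) hΔ (j+1)
  have hNpos : (0:ℝ) < (N:ℝ) := by exact_mod_cast hN
  have ha : (a:ℝ) ≤ N := by exact_mod_cast h
  have hq : (0:ℝ) < DD Δ (j+1) / (4*N) := by positivity
  have h1 : (a:ℝ) * (DD Δ (j+1)/(4*N)) ≤ (N:ℝ) * (DD Δ (j+1)/(4*N)) :=
    mul_le_mul_of_nonneg_right ha hq.le
  have h2 : (N:ℝ) * (DD Δ (j+1)/(4*N)) = DD Δ (j+1)/4 := by
    field_simp
  rw [rad, stp]
  linarith

lemma rad_le_DD (hΔ : 0 < Δ) (hN : 1 ≤ N) {j a : ℕ} (h : a ≤ 2 * N) : rad Δ N j a ≤ DD Δ (j + 1) := by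
  have hD := DD_pos (Δ := Δ) hΔ (j+1)
  have hNpos : (0:ℝ) < (N:ℝ) := by exact_mod_cast hN
  have ha : (a:ℝ) ≤ 2 * N := by exact_mod_cast h
  have hq : (0:ℝ) < DD Δ (j+1) / (4*N) := by positivity
  have h1 : (a:ℝ) * (DD Δ (j+1)/(4*N)) ≤ (2*(N:ℝ)) * (DD Δ (j+1)/(4*N)) :=
    mul_le_mul_of_nonneg_right ha hq.le
  have h2 : (2*(N:ℝ)) * (DD Δ (j+1)/(4*N)) = DD Δ (j+1)/2 := by
    field_simp
    ring
  rw [rad, stp]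
  linarith

lemma rad_next_le (hΔ : 0 < Δ) (hN : 1 ≤ N) (j : ℕ) : rad Δ N (j + 1) (N + 1) ≤ rad Δ N j 0 := by
  have h1 : rad Δ N (j+1) (N+1) ≤ DD Δ (j + 2) := rad_le_DD hΔ hN (by omega)
  have h2 : DD Δ (j+2) = DD Δ (j+1) / 8 := DD_succ _
  have h3 : rad Δ N j 0 = DD Δ (j+1) / 4 := by rw [rad]; push_cast; ring
  have hD := DD_pos (Δ := Δ) hΔ (j+1)
  rw [h3]
  rw [h2] at h1
  linarith

end radlems

noncomputable def headF (Δ : ℝ) (N : ℕ) (j : ℕ) (w : (X ≃ Fin m) × Fin N) (x : X) : X :=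
  mhead w.1 (rad Δ N j (w.2 + 1)) x

def Good (Δ : ℝ) (N : ℕ) (j : ℕ) (w : (X ≃ Fin m) × Fin N) (x : X) : Prop :=
  dist x (mhead w.1 (rad Δ N j ((w.2 : ℕ) + 2)) x) ≤ rad Δ N j (w.2 : ℕ)

lemma Good.head_eq {Δ : ℝ} {N : ℕ} (hΔ : 0 < Δ) (hN : 1 ≤ N) {j : ℕ}
    {w : (X ≃ Fin m) × Fin N} {x y : X} (hg : Good Δ N j w x)
    (hxy : dist x y ≤ stp Δ N j) : headF Δ N j w x = headF Δ N j w y := by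
  have hst : 0 ≤ stp Δ N j := le_of_lt (stp_pos hΔ hN)
  have hGood' : dist x (mhead w.1 (rad Δ N j ((w.2:ℕ) + 1) + stp Δ N j) x)
      ≤ rad Δ N j ((w.2:ℕ) + 1) - stp Δ N j := by
    rw [rad_add_one, rad_sub_one]
    exact hg
  have hx : mhead w.1 (rad Δ N j ((w.2:ℕ) + 1)) x
      = mhead w.1 (rad Δ N j ((w.2:ℕ) + 1) + stp Δ N j) x :=
    mhead_eq_of_close hst hGood' (by simp [hst])
  have hy : mhead w.1 (rad Δ N j ((w.2:ℕ) + 1)) y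
      = mhead w.1 (rad Δ N j ((w.2:ℕ) + 1) + stp Δ N j) x :=
    mhead_eq_of_close hst hGood' hxy
  rw [headF, headF, hx, hy]


noncomputable def gInd (Δ : ℝ) (N : ℕ) (j : ℕ) {X : Type} [MetricSpace X] [Fintype X] {m : ℕ}
    (w : (X ≃ Fin m) × Fin N) (x : X) : ℝ := if Good Δ N j w x then 1 else 0

lemma gInd_nonneg {Δ : ℝ} {N j : ℕ} {X : Type} [MetricSpace X] [Fintype X] {m : ℕ}
    {w : (X ≃ Fin m) × Fin N} {x : X} : 0 ≤ gInd Δ N j w x := by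
  rw [gInd]; split <;> norm_num

section counting
variable {X : Type} [MetricSpace X] [Fintype X] {m : ℕ}

lemma count_good {Δ : ℝ} (hΔ : 0 < Δ) {N : ℕ} (hN : 1 ≤ N) (j : ℕ) (x : X) (a : Fin N) :
    ((univ.filter fun σ : X ≃ Fin m => Good Δ N j (σ, a) x).card : ℝ)
      = (Fintype.card (X ≃ Fin m) : ℝ) * ((mball x (rad Δ N j (a : ℕ))).card : ℝ)
        / ((mball x (rad Δ N j ((a : ℕ) + 2))).card : ℝ) := by
  have hr2 : (0:ℝ) ≤ rad Δ N j ((a:ℕ)+2) := rad_nonneg hΔ hN _ _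
  have hW : (mball x (rad Δ N j ((a:ℕ)+2))).Nonempty := ⟨x, self_mem_mball hr2⟩
  have hV : mball x (rad Δ N j (a:ℕ)) ⊆ mball x (rad Δ N j ((a:ℕ)+2)) :=
    mball_mono (rad_mono hΔ hN (by omega))
  have hfilter : (univ.filter fun σ : X ≃ Fin m => Good Δ N j (σ, a) x)
      = (univ.filter fun σ : X ≃ Fin m =>
          argminW (mball x (rad Δ N j ((a:ℕ)+2))) hW σ ∈ mball x (rad Δ N j (a:ℕ))) := by
    apply filter_congr
    intro σ _
    simp only [Good]
    rw [mhead_eq_argminW σ hr2 x]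
    exact mem_mball.symm
  have hcount := count_argmin (m := m) (mball x (rad Δ N j ((a:ℕ)+2)))
    (mball x (rad Δ N j (a:ℕ))) hW hV
  have hWpos : (0:ℝ) < ((mball x (rad Δ N j ((a:ℕ)+2))).card : ℝ) := by
    exact_mod_cast card_pos.mpr hW
  rw [hfilter, eq_div_iff (ne_of_gt hWpos)]
  exact_mod_cast hcount

lemma sum_g_lower {Δ : ℝ} (hΔ : 0 < Δ) {N : ℕ} (hN : 1 ≤ N) (j : ℕ) (x : X) :
    (Fintype.card (X ≃ Fin m) : ℝ) * N *
      (((mball x (rad Δ N j 0)).card : ℝ) / ((mball x (rad Δ N j (N+1))).card : ℝ))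
        ^ (2 / (N:ℝ))
      ≤ ∑ w : (X ≃ Fin m) × Fin N, gInd Δ N j w x := by
  classical
  set K := (Fintype.card (X ≃ Fin m) : ℝ) with hK
  have hKnn : 0 ≤ K := by positivity
  set b : ℕ → ℝ := fun i => ((mball x (rad Δ N j i)).card : ℝ) with hb
  have hbpos : ∀ i, 0 < b i := fun i => by
    have hx : x ∈ mball x (rad Δ N j i) := self_mem_mball (rad_nonneg hΔ hN _ _)
    have := card_pos.mpr ⟨x, hx⟩
    simp only [hb]
    exact_mod_cast this
  have hbmono : ∀ {i k : ℕ}, i ≤ k → b i ≤ b k := fun {i k} h => by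
    have := card_le_card (mball_mono (x := x)
      (rad_mono (Δ := Δ) (N := N) (j := j) hΔ hN h))
    simp only [hb]
    exact_mod_cast this
  -- step 1: rewrite the sum
  have hsum : ∑ w : (X ≃ Fin m) × Fin N, gInd Δ N j w x
      = ∑ a : Fin N, K * b (a : ℕ) / b ((a : ℕ) + 2) := by
    rw [Fintype.sum_prod_type_right]
    refine Finset.sum_congr rfl (fun a _ => ?_)
    have h1 : ∑ σ : X ≃ Fin m, gInd Δ N j (σ, a) x
        = ((univ.filter fun σ : X ≃ Fin m => Good Δ N j (σ, a) x).card : ℝ) := by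
      simp only [gInd]
      rw [Finset.sum_boole]
    rw [h1, count_good hΔ hN j x a]
  rw [hsum]
  -- step 2: AM-GM
  set q : Fin N → ℝ := fun a => b (a : ℕ) / b ((a : ℕ) + 2) with hq
  have hqnn : ∀ a, 0 ≤ q a := fun a => le_of_lt (div_pos (hbpos _) (hbpos _))
  have hAM := amgm hN q hqnn
  -- step 3: the product telescopes
  have hprodq : ∏ a : Fin N, q a = (b 0 * b 1) / (b N * b (N + 1)) := by
    have h1 : ∏ a : Fin N, q a
        = (∏ i ∈ Finset.range N, b i) / (∏ i ∈ Finset.range N, b (i + 2)) := by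
      rw [← Finset.prod_div_distrib]
      exact Fin.prod_univ_eq_prod_range (fun i => b i / b (i + 2)) N
    have e1 := Finset.prod_range_add b N 2
    have e2 := Finset.prod_range_add b 2 N
    have e3 : (N : ℕ) + 2 = 2 + N := by omega
    rw [e3] at e1
    rw [e1] at e2
    -- e2 : (∏ range N b) * ∏ range 2 (fun x => b (N + x)) = (∏ range 2 b) * ∏ range N (fun x => b (2 + x))
    have e4 : ∏ i ∈ Finset.range 2, b (N + i) = b N * b (N + 1) := by
      rw [Finset.prod_range_succ, Finset.prod_range_one]
      norm_num
    have e5 : ∏ i ∈ Finset.range 2, b i = b 0 * b 1 := by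
      rw [Finset.prod_range_succ, Finset.prod_range_one]
    have e6 : ∏ i ∈ Finset.range N, b (2 + i) = ∏ i ∈ Finset.range N, b (i + 2) :=
      Finset.prod_congr rfl (fun i _ => by rw [Nat.add_comm])
    rw [e4, e5, e6] at e2
    have hd1 : (0:ℝ) < ∏ i ∈ Finset.range N, b (i + 2) :=
      Finset.prod_pos (fun i _ => hbpos _)
    have hd2 : (0:ℝ) < b N * b (N + 1) := mul_pos (hbpos _) (hbpos _)
    rw [h1, div_eq_div_iff hd1.ne' hd2.ne']
    linarith [e2]
  -- step 4: compare with the squared ratio and conclude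
  have hbase : (0:ℝ) ≤ b 0 / b (N + 1) := le_of_lt (div_pos (hbpos 0) (hbpos (N+1)))
  have hsq : (b 0 / b (N + 1)) ^ (2:ℕ) ≤ ∏ a : Fin N, q a := by
    have h01 : b 0 ≤ b 1 := hbmono (by omega)
    have hN1 : b N ≤ b (N + 1) := hbmono (by omega)
    have p0 := hbpos 0
    have p1 := hbpos 1
    have pN := hbpos N
    have pN1 := hbpos (N + 1)
    rw [hprodq, div_pow, div_le_div_iff₀ (pow_pos pN1 2) (mul_pos pN pN1)]
    have t1 : b 0 ^ 2 ≤ b 0 * b 1 := by nlinarith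
    have s1 : b 0 ^ 2 * (b N * b (N+1)) ≤ b 0 * b 1 * (b N * b (N+1)) :=
      mul_le_mul_of_nonneg_right t1 (le_of_lt (mul_pos pN pN1))
    have t2 : b N * b (N+1) ≤ b (N+1) * b (N+1) :=
      mul_le_mul_of_nonneg_right hN1 (le_of_lt pN1)
    have s2 : b 0 * b 1 * (b N * b (N+1)) ≤ b 0 * b 1 * (b (N+1) * b (N+1)) :=
      mul_le_mul_of_nonneg_left t2 (le_of_lt (mul_pos p0 p1))
    nlinarith [s1, s2]
  have hrpow : (b 0 / b (N + 1)) ^ (2 / (N:ℝ)) ≤ (∏ a : Fin N, q a) ^ ((N:ℝ)⁻¹) := by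
    have hNpos : (0:ℝ) < (N:ℝ) := by exact_mod_cast hN
    have he : (2 / (N:ℝ)) = ((2:ℕ):ℝ) * (N:ℝ)⁻¹ := by push_cast; ring
    rw [he, Real.rpow_mul hbase, Real.rpow_natCast]
    exact Real.rpow_le_rpow (by positivity) hsq (by positivity)
  have hKsum : ∑ a : Fin N, K * b (a:ℕ) / b ((a:ℕ) + 2) = K * ∑ a : Fin N, q a := by
    rw [Finset.mul_sum]
    exact Finset.sum_congr rfl (fun a _ => mul_div_assoc _ _ _)
  rw [hKsum]
  calc K * (N:ℝ) * (b 0 / b (N + 1)) ^ (2 / (N:ℝ))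
      ≤ K * (N:ℝ) * ((∏ a : Fin N, q a) ^ ((N:ℝ)⁻¹)) := by
        apply mul_le_mul_of_nonneg_left hrpow
        positivity
  _ = K * ((∏ a : Fin N, q a) ^ ((N:ℝ)⁻¹) * (N:ℝ)) := by ring
  _ ≤ K * ∑ a : Fin N, q a := mul_le_mul_of_nonneg_left hAM hKnn

end counting

lemma core (N : ℕ) (hN : 1 ≤ N) (X : Type) [MetricSpace X] [Fintype X]
    (hcard : 2 ≤ Fintype.card X) :
    ∃ (Y : Finset X) (ρ : X → X → ℝ),
      (Fintype.card X : ℝ) ^ (1 - 2 / (N:ℝ)) ≤ (Y.card : ℝ) ∧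
      IsUltrametricOn (↑Y) ρ ∧
      ∀ x ∈ Y, ∀ y ∈ Y, dist x y ≤ ρ x y ∧ ρ x y ≤ 32 * N * dist x y := by
  classical
  set n := Fintype.card X with hncard
  have hn1 : (1:ℝ) ≤ (n:ℝ) := by exact_mod_cast le_trans (by norm_num) hcard
  have hnpos : (0:ℝ) < (n:ℝ) := lt_of_lt_of_le one_pos hn1
  obtain ⟨x0, y0, hxy0⟩ := Fintype.exists_pair_of_one_lt_card (by omega : 1 < Fintype.card X)
  -- diameter
  have huniv2 : ((univ : Finset X) ×ˢ (univ : Finset X)).Nonempty := ⟨(x0, y0), by simp⟩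
  set Δ := ((univ : Finset X) ×ˢ (univ : Finset X)).sup' huniv2 (fun p => dist p.1 p.2)
    with hΔdef
  have hdistΔ : ∀ x y : X, dist x y ≤ Δ := fun x y =>
    le_sup' (f := fun p : X × X => dist p.1 p.2) (by simp : ((x, y) : X × X) ∈ _)
  have hΔ : 0 < Δ := lt_of_lt_of_le (dist_pos.mpr hxy0) (hdistΔ x0 y0)
  -- minimal positive distance
  have hoffne : ((univ : Finset X).offDiag).Nonempty :=
    ⟨(x0, y0), Finset.mem_offDiag.mpr ⟨mem_univ _, mem_univ _, hxy0⟩⟩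
  set dmin := ((univ : Finset X).offDiag).inf' hoffne (fun p => dist p.1 p.2) with hdmindef
  have hdmin_le : ∀ x y : X, x ≠ y → dmin ≤ dist x y := by
    intro x y h
    have hmem : ((x, y) : X × X) ∈ (univ : Finset X).offDiag :=
      Finset.mem_offDiag.mpr ⟨mem_univ _, mem_univ _, h⟩
    exact inf'_le _ hmem
  have hdminpos : 0 < dmin := by
    obtain ⟨p, hp, hpe⟩ := Finset.exists_mem_eq_inf' hoffne (fun p : X × X => dist p.1 p.2)
    rw [hdmindef, hpe]
    exact dist_pos.mpr (Finset.mem_offDiag.mp hp).2.2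
  -- number of scales
  obtain ⟨k0, hk0⟩ := pow_unbounded_of_one_lt (Δ / dmin) (by norm_num : (1:ℝ) < 8)
  set J := max k0 1 with hJdef
  have hJ1 : 1 ≤ J := le_max_right _ _
  have hDJ : DD Δ J < dmin := by
    have h1 : Δ / dmin < 8 ^ J := lt_of_lt_of_le hk0
      (pow_le_pow_right₀ (by norm_num) (le_max_left _ _))
    rw [div_lt_iff₀ hdminpos] at h1
    rw [DD, div_lt_iff₀ (by positivity : (0:ℝ) < 8 ^ J)]
    linarith
  -- sample space
  have hKpos : 0 < Fintype.card (X ≃ Fin n) := Fintype.card_pos_iff.mpr ⟨Fintype.equivFin X⟩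
  set K := Fintype.card (X ≃ Fin n) with hKdef
  haveI hNFin : Nonempty (Fin N) := ⟨⟨0, by omega⟩⟩
  -- per-point lower bound
  have point_lower : ∀ x : X,
      ((K : ℝ) * N) ^ J * (n:ℝ) ^ (-(2 / (N:ℝ)))
        ≤ ∏ j ∈ Finset.range J, ∑ w : (X ≃ Fin n) × Fin N, gInd Δ N j w x := by
    intro x
    set A : ℕ → ℝ := fun j => ((mball x (rad Δ N j 0)).card : ℝ) with hA
    set B : ℕ → ℝ := fun j => ((mball x (rad Δ N j (N+1))).card : ℝ) with hB
    have hApos : ∀ j, 0 < A j := fun j => by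
      have hx : x ∈ mball x (rad Δ N j 0) := self_mem_mball (rad_nonneg hΔ hN _ _)
      have := card_pos.mpr ⟨x, hx⟩
      simp only [hA]; exact_mod_cast this
    have hBpos : ∀ j, 0 < B j := fun j => by
      have hx : x ∈ mball x (rad Δ N j (N+1)) := self_mem_mball (rad_nonneg hΔ hN _ _)
      have := card_pos.mpr ⟨x, hx⟩
      simp only [hB]; exact_mod_cast this
    have hterm : ∀ j, (K:ℝ) * N * (A j / B j) ^ (2/(N:ℝ))
        ≤ ∑ w : (X ≃ Fin n) × Fin N, gInd Δ N j w x := fun j =>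
      sum_g_lower hΔ hN j x
    have hprodle : ∏ j ∈ Finset.range J, ((K:ℝ) * N * (A j / B j) ^ (2/(N:ℝ)))
        ≤ ∏ j ∈ Finset.range J, ∑ w : (X ≃ Fin n) × Fin N, gInd Δ N j w x := by
      apply Finset.prod_le_prod
      · intro j _
        have := hApos j; have := hBpos j
        positivity
      · exact fun j _ => hterm j
    have hsplit : ∏ j ∈ Finset.range J, ((K:ℝ) * N * (A j / B j) ^ (2/(N:ℝ)))
        = ((K:ℝ) * N) ^ J * (∏ j ∈ Finset.range J, (A j / B j)) ^ (2/(N:ℝ)) := by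
      rw [Finset.prod_mul_distrib, Finset.prod_const, Finset.card_range,
        Real.finset_prod_rpow _ _ (fun j _ => le_of_lt (div_pos (hApos j) (hBpos j))) _]
    have hAB : ∀ j, B (j+1) ≤ A j := fun j => by
      have := card_le_card (mball_mono (x := x) (rad_next_le hΔ hN j))
      simp only [hA, hB]; exact_mod_cast this
    have htel : (1:ℝ)/(n:ℝ) ≤ ∏ j ∈ Finset.range J, (A j / B j) := by
      refine le_trans ?_ (telescope A B hApos hBpos hAB J hJ1)
      rw [div_le_div_iff₀ hnpos (hBpos 0)]
      have h1 : (1:ℝ) ≤ A (J-1) := by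
        have := hApos (J-1)
        have : (1:ℕ) ≤ (mball x (rad Δ N (J-1) 0)).card := card_pos.mpr
          ⟨x, self_mem_mball (rad_nonneg hΔ hN _ _)⟩
        simp only [hA]; exact_mod_cast this
      have h2 : B 0 ≤ (n:ℝ) := by
        have := card_le_card (subset_univ (mball x (rad Δ N 0 (N+1))))
        rw [card_univ] at this
        simp only [hB]; exact_mod_cast this
      nlinarith [hBpos 0]
    have hfinal : (n:ℝ) ^ (-(2/(N:ℝ)))
        ≤ (∏ j ∈ Finset.range J, (A j / B j)) ^ (2/(N:ℝ)) := by
      have h2N : (0:ℝ) ≤ 2/(N:ℝ) := by positivity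
      have hmono := Real.rpow_le_rpow (by positivity : (0:ℝ) ≤ 1/(n:ℝ)) htel h2N
      rwa [one_div, Real.inv_rpow hnpos.le, ← Real.rpow_neg hnpos.le] at hmono
    calc ((K : ℝ) * N) ^ J * (n:ℝ) ^ (-(2 / (N:ℝ)))
        ≤ ((K:ℝ) * N) ^ J * (∏ j ∈ Finset.range J, (A j / B j)) ^ (2/(N:ℝ)) := by
          apply mul_le_mul_of_nonneg_left hfinal
          positivity
    _ = ∏ j ∈ Finset.range J, ((K:ℝ) * N * (A j / B j) ^ (2/(N:ℝ))) := hsplit.symm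
    _ ≤ _ := hprodle
  -- survivor sets
  set Yf : (Fin J → (X ≃ Fin n) × Fin N) → Finset X :=
    fun ω => univ.filter (fun x => ∀ j : Fin J, Good Δ N (j:ℕ) (ω j) x) with hYf
  have hYcard : ∀ ω, ((Yf ω).card : ℝ) = ∑ x : X, ∏ j : Fin J, gInd Δ N (j:ℕ) (ω j) x := by
    intro ω
    have h1 : ∀ x : X, ∏ j : Fin J, gInd Δ N (j:ℕ) (ω j) x
        = if (∀ j : Fin J, Good Δ N (j:ℕ) (ω j) x) then (1:ℝ) else 0 := by
      intro x
      simp only [gInd]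
      rw [Fintype.prod_boole]
      congr
    rw [Finset.sum_congr rfl (fun x _ => h1 x), Finset.sum_boole]
  have htotal : ((K : ℝ) * N) ^ J * ((n:ℝ) ^ (1 - 2/(N:ℝ)))
      ≤ ∑ ω : Fin J → (X ≃ Fin n) × Fin N, ((Yf ω).card : ℝ) := by
    have hswap : ∑ ω : Fin J → (X ≃ Fin n) × Fin N, ∑ x : X, ∏ j : Fin J,
        gInd Δ N (j:ℕ) (ω j) x
        = ∑ x : X, ∏ j : Fin J, ∑ w : (X ≃ Fin n) × Fin N, gInd Δ N (j:ℕ) w x := by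
      rw [Finset.sum_comm]
      refine Finset.sum_congr rfl (fun x _ => ?_)
      exact (Fintype.prod_sum (f := fun (j : Fin J) w => gInd Δ N (j:ℕ) w x)).symm
    have hpt : ∀ x : X, ((K : ℝ) * N) ^ J * (n:ℝ) ^ (-(2 / (N:ℝ)))
        ≤ ∏ j : Fin J, ∑ w : (X ≃ Fin n) × Fin N, gInd Δ N (j:ℕ) w x := by
      intro x
      rw [Fin.prod_univ_eq_prod_range
        (fun j => ∑ w : (X ≃ Fin n) × Fin N, gInd Δ N j w x) J]
      exact point_lower x
    calc ((K : ℝ) * N) ^ J * ((n:ℝ) ^ (1 - 2/(N:ℝ)))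
        = (n : ℝ) * (((K : ℝ) * N) ^ J * (n:ℝ) ^ (-(2 / (N:ℝ)))) := by
          rw [show (1 - 2/(N:ℝ)) = 1 + (-(2/(N:ℝ))) by ring, Real.rpow_add hnpos,
            Real.rpow_one]
          ring
    _ ≤ ∑ x : X, ∏ j : Fin J, ∑ w : (X ≃ Fin n) × Fin N, gInd Δ N (j:ℕ) w x := by
          have := Finset.sum_le_sum (fun x (_ : x ∈ (univ : Finset X)) => hpt x)
          rw [Finset.sum_const, card_univ] at this
          rw [← hncard] at this
          simpa [nsmul_eq_mul] using this
    _ = ∑ ω : Fin J → (X ≃ Fin n) × Fin N, ∑ x : X, ∏ j : Fin J,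
          gInd Δ N (j:ℕ) (ω j) x := hswap.symm
    _ = ∑ ω : Fin J → (X ≃ Fin n) × Fin N, ((Yf ω).card : ℝ) := by
          exact Finset.sum_congr rfl (fun ω _ => (hYcard ω).symm)
  -- extract a good sample
  haveI hΩ'ne : Nonempty ((X ≃ Fin n) × Fin N) := ⟨(Fintype.equivFin X, ⟨0, by omega⟩)⟩
  have hcardΩ : (Fintype.card (Fin J → (X ≃ Fin n) × Fin N) : ℝ) = ((K:ℝ) * N) ^ J := by
    rw [Fintype.card_fun, Fintype.card_prod, Fintype.card_fin, Fintype.card_fin]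
    push_cast
    rfl
  obtain ⟨ω, -, hω⟩ := Finset.exists_le_of_sum_le
    (s := (univ : Finset (Fin J → (X ≃ Fin n) × Fin N)))
    (f := fun _ => (n:ℝ) ^ (1 - 2/(N:ℝ))) (g := fun ω => ((Yf ω).card : ℝ))
    Finset.univ_nonempty
    (by
      rw [Finset.sum_const, card_univ, nsmul_eq_mul, hcardΩ]
      exact htotal)
  -- geometry of the chosen sample
  set hd : Fin J → X → X := fun j x => headF Δ N (j:ℕ) (ω j) x with hhd
  set sm : ℕ → X → X → Prop :=
    fun M x y => ∀ j : Fin J, (j:ℕ) < M → hd j x = hd j y with hsm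
  set L : X → X → ℕ := fun x y => Nat.findGreatest (fun M => sm M x y) J with hL
  set ρ : X → X → ℝ := fun x y => if x = y then 0 else DD Δ (L x y) with hρ
  have hsm0 : ∀ x y, sm 0 x y := fun x y j hj => absurd hj (by omega)
  have hsmanti : ∀ {M M' : ℕ} {x y}, M' ≤ M → sm M x y → sm M' x y :=
    fun {M M' x y} h hs j hj => hs j (lt_of_lt_of_le hj h)
  have hsmL : ∀ x y, sm (L x y) x y := by
    intro x y
    rcases Nat.eq_zero_or_pos (L x y) with h0 | hpos
    · rw [h0]; exact hsm0 x y
    · exact Nat.findGreatest_of_ne_zero rfl hpos.ne'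
  have hLle : ∀ x y, L x y ≤ J := fun x y => Nat.findGreatest_le J
  have hLsymm : ∀ x y, L x y = L y x := by
    intro x y
    apply le_antisymm
    · exact Nat.findGreatest_mono_left (fun M h j hj => (h j hj).symm) J
    · exact Nat.findGreatest_mono_left (fun M h j hj => (h j hj).symm) J
  have hhd_dist : ∀ (j : Fin J) (x y : X), hd j x = hd j y →
      dist x y ≤ DD Δ ((j:ℕ)+1) := by
    intro j x y h
    have hr : (0:ℝ) ≤ rad Δ N (j:ℕ) (((ω j).2 : ℕ) + 1) := rad_nonneg hΔ hN _ _
    have h1 : dist x (hd j x) ≤ rad Δ N (j:ℕ) (((ω j).2 : ℕ)+1) :=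
      mem_mball.mp (mhead_mem hr)
    have h2 : dist y (hd j y) ≤ rad Δ N (j:ℕ) (((ω j).2 : ℕ)+1) :=
      mem_mball.mp (mhead_mem hr)
    have hhalf : rad Δ N (j:ℕ) (((ω j).2:ℕ)+1) ≤ DD Δ ((j:ℕ)+1)/2 :=
      rad_le_half hΔ hN (by have := ((ω j).2).isLt; omega)
    have e : dist (hd j x) y = dist y (hd j y) := by rw [h, dist_comm]
    calc dist x y ≤ dist x (hd j x) + dist (hd j x) y := dist_triangle _ _ _
    _ = dist x (hd j x) + dist y (hd j y) := by rw [e]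
    _ ≤ DD Δ ((j:ℕ)+1)/2 + DD Δ ((j:ℕ)+1)/2 := add_le_add (h1.trans hhalf) (h2.trans hhalf)
    _ = DD Δ ((j:ℕ)+1) := by ring
  have hdist_le : ∀ x y : X, dist x y ≤ DD Δ (L x y) := by
    intro x y
    rcases Nat.eq_zero_or_pos (L x y) with h0 | hpos
    · rw [h0]
      simpa [DD] using hdistΔ x y
    · obtain ⟨M, hMe⟩ : ∃ M, L x y = M + 1 := ⟨L x y - 1, by omega⟩
      have hMlt : M < J := by have := hLle x y; omega
      have hhdeq : hd ⟨M, hMlt⟩ x = hd ⟨M, hMlt⟩ y :=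
        hsmL x y ⟨M, hMlt⟩ (by show M < L x y; omega)
      have h2 := hhd_dist ⟨M, hMlt⟩ x y hhdeq
      rw [hMe]
      exact h2
  have hLlt : ∀ x y : X, x ≠ y → L x y < J := by
    intro x y hne
    rcases Nat.lt_or_ge (L x y) J with h | h
    · exact h
    · exfalso
      have hLJ : L x y = J := le_antisymm (hLle x y) h
      have hle := hdist_le x y
      rw [hLJ] at hle
      have := hdmin_le x y hne
      linarith [hDJ]
  have hsep : ∀ x y : X, x ∈ Yf ω → x ≠ y → stp Δ N (L x y) < dist x y := by
    intro x y hxY hne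
    by_contra hcon
    push_neg at hcon
    have hLJ := hLlt x y hne
    have hLJ1 : L x y + 1 ≤ J := hLJ
    have hnotsame : ¬ sm (L x y + 1) x y :=
      Nat.findGreatest_is_greatest (n := J) (Nat.lt_succ_self _) hLJ1
    apply hnotsame
    intro j hj
    rcases Nat.lt_or_ge (j:ℕ) (L x y) with h | h
    · exact hsmL x y j h
    · have hjL : (j:ℕ) = L x y := by omega
      have hgood : Good Δ N (j:ℕ) (ω j) x := (mem_filter.mp hxY).2 j
      exact Good.head_eq hΔ hN hgood (by rw [hjL]; exact hcon)
  -- final assembly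
  refine ⟨Yf ω, ρ, hω, ⟨?_, ?_, ?_, ?_⟩, ?_⟩
  · intro x _
    simp only [hρ, if_pos rfl]
  · intro x _ y _ hne
    simp only [hρ, if_neg hne]
    exact DD_pos hΔ _
  · intro x _ y _
    rcases eq_or_ne x y with rfl | hne
    · rfl
    · simp only [hρ, if_neg hne, if_neg (Ne.symm hne)]
      rw [hLsymm]
  · intro x _ y _ z _
    have hρnn : ∀ a b : X, 0 ≤ ρ a b := by
      intro a b
      simp only [hρ]
      split
      · exact le_rfl
      · exact le_of_lt (DD_pos hΔ _)
    rcases eq_or_ne x z with rfl | hxz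
    · simp only [hρ, if_pos rfl]
      exact le_trans (hρnn x y) (le_max_left _ _)
    rcases eq_or_ne x y with rfl | hxy
    · exact le_max_right _ _
    rcases eq_or_ne y z with rfl | hyz
    · exact le_max_left _ _
    · simp only [hρ, if_neg hxz, if_neg hxy, if_neg hyz]
      have hsxz : sm (min (L x y) (L y z)) x z := by
        intro j hj
        have h1 := hsmL x y j (lt_of_lt_of_le hj (min_le_left _ _))
        have h2 := hsmL y z j (lt_of_lt_of_le hj (min_le_right _ _))
        exact h1.trans h2
      have hminle : min (L x y) (L y z) ≤ L x z :=
        Nat.le_findGreatest (le_trans (min_le_left _ _) (hLle x y)) hsxz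
      have hDle : DD Δ (L x z) ≤ DD Δ (min (L x y) (L y z)) := DD_anti hΔ hminle
      rcases le_total (L x y) (L y z) with hc | hc
      · rw [min_eq_left hc] at hDle
        exact le_trans hDle (le_max_left _ _)
      · rw [min_eq_right hc] at hDle
        exact le_trans hDle (le_max_right _ _)
  · intro x hxY y hyY
    rcases eq_or_ne x y with rfl | hne
    · simp only [hρ, if_pos rfl, dist_self]
      constructor <;> norm_num
    · simp only [hρ, if_neg hne]
      constructor
      · exact hdist_le x y
      · have hst := hsep x y hxY hne
        have hDst : DD Δ (L x y) = 32 * N * stp Δ N (L x y) := by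
          rw [stp, DD_succ]
          have hNne : ((N:ℝ)) ≠ 0 := by positivity
          field_simp
          ring
        rw [hDst]
        have h32 : (0:ℝ) < 32 * (N:ℝ) := by positivity
        exact mul_le_mul_of_nonneg_left (le_of_lt hst) (le_of_lt h32)

lemma singleton_case (α : ℝ) (X : Type) [MetricSpace X] [Fintype X]
    (hn : 1 ≤ Fintype.card X) :
    ∃ (Y : Finset X) (ρ : X → X → ℝ), (Y.card : ℝ) = 1 ∧ IsUltrametricOn (↑Y) ρ ∧
      ∀ x ∈ Y, ∀ y ∈ Y, dist x y ≤ ρ x y ∧ ρ x y ≤ α * dist x y := by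
  have hne : Nonempty X := Fintype.card_pos_iff.mp (by omega)
  obtain ⟨x₀⟩ := hne
  have hmem : ∀ x : X, x ∈ (({x₀} : Finset X) : Set X) → x = x₀ := by
    intro x hx
    simpa using hx
  refine ⟨{x₀}, fun _ _ => 0, by simp, ⟨?_, ?_, ?_, ?_⟩, ?_⟩
  · intro x _; rfl
  · intro x hx y hy hxy
    exact absurd ((hmem x hx).trans (hmem y hy).symm) hxy
  · intro x _ y _; rfl
  · intro x _ y _ z _
    simp
  · intro x hx y hy
    have hx' : x = x₀ := by simpa using hx
    have hy' : y = x₀ := by simpa using hy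
    subst hx'; subst hy'
    simp

end MRU

/-- Metric Ramsey-type theorem: every `n`-point metric space contains a subset of
size at least `n^(1 - C·log(2α)/α)` which is `α`-equivalent to an ultrametric. -/
theorem metric_ramsey_ultrametric :
    ∃ C : ℝ, 0 < C ∧
      ∀ (α : ℝ), 1 < α →
        ∀ (X : Type) [MetricSpace X] [Fintype X], 1 ≤ Fintype.card X →
          ∃ (Y : Finset X) (ρ : X → X → ℝ),
            (Fintype.card X : ℝ) ^ (1 - C * Real.log (2 * α) / α) ≤ (Y.card : ℝ) ∧
            IsUltrametricOn (↑Y) ρ ∧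
            ∀ x ∈ Y, ∀ y ∈ Y,
              dist x y ≤ ρ x y ∧ ρ x y ≤ α * dist x y := by
  classical
  refine ⟨200, by norm_num, ?_⟩
  intro α hα X _ _ hn
  by_cases hle : (Fintype.card X : ℝ) ^ (1 - 200 * Real.log (2 * α) / α) ≤ 1
  · obtain ⟨Y, ρ, hcard, hum, hb⟩ := MRU.singleton_case α X hn
    exact ⟨Y, ρ, by rw [hcard]; exact hle, hum, hb⟩
  · push_neg at hle
    set e := 1 - 200 * Real.log (2 * α) / α with he
    have hn1 : (1:ℝ) ≤ (Fintype.card X : ℝ) := by exact_mod_cast hn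
    have hαpos : (0:ℝ) < α := by linarith
    have he_pos : 0 < e := by
      by_contra h
      push_neg at h
      have := Real.rpow_le_one_of_one_le_of_nonpos hn1 h
      linarith
    have hlog2' : (0.6931471803:ℝ) < Real.log 2 := Real.log_two_gt_d9
    have hlog2 : Real.log 2 ≤ Real.log (2 * α) := by
      apply Real.log_le_log (by norm_num)
      nlinarith
    have hkey : 200 * Real.log (2 * α) < α := by
      have h1 : 200 * Real.log (2 * α) / α < 1 := by
        simp only [he] at he_pos
        linarith
      calc 200 * Real.log (2 * α) = (200 * Real.log (2 * α) / α) * α := by field_simp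
      _ < 1 * α := mul_lt_mul_of_pos_right h1 hαpos
      _ = α := one_mul α
    have hα138 : (138:ℝ) < α := by nlinarith
    set N := ⌊α / 32⌋₊ with hNdef
    have hN1 : 1 ≤ N := Nat.le_floor (by push_cast; linarith)
    have hNR : (1:ℝ) ≤ (N:ℝ) := by exact_mod_cast hN1
    have hNle : (N:ℝ) ≤ α / 32 := Nat.floor_le (by positivity)
    have hNge : α / 64 ≤ (N:ℝ) := by
      have h1 := Nat.lt_floor_add_one (α / 32)
      rw [← hNdef] at h1
      linarith
    have hcard2 : 2 ≤ Fintype.card X := by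
      by_contra h
      push_neg at h
      have h1 : Fintype.card X = 1 := by omega
      rw [h1] at hle
      norm_num at hle
    obtain ⟨Y, ρ, hsize, hum, hb⟩ := MRU.core N hN1 X hcard2
    refine ⟨Y, ρ, ?_, hum, ?_⟩
    · refine le_trans ?_ hsize
      apply Real.rpow_le_rpow_of_exponent_le hn1
      have h2N : 2 / (N:ℝ) ≤ 128 / α := by
        rw [div_le_div_iff₀ (by linarith) hαpos]
        nlinarith
      have h128 : 128 / α ≤ 200 * Real.log (2 * α) / α := by
        rw [div_le_div_iff₀ hαpos hαpos]
        nlinarith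
      simp only [he]
      linarith
    · intro x hx y hy
      obtain ⟨h1, h2⟩ := hb x hx y hy
      refine ⟨h1, le_trans h2 ?_⟩
      have h32 : (32:ℝ) * N ≤ α := by linarith
      exact mul_le_mul_of_nonneg_right h32 dist_nonneg
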